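/- (Decomposition theorem of subword complexes, first part.) Let I be a facet of the subword complex SC(Q,π) of a (possibly infinite) Coxeter system (W,S), and let F be a flat of r(I,Q). Then F is the root function of the subword complex SC(Q_F,π_F) of type W_F with respect to the facet I_F: writing r_F for the root function of SC(Q_F,π_F) over the Coxeter system (W_F,Δ_F), one has r_F(I_F,k) = r(I,j_k) for every k ∈ [r']. -/

import Mathlib

noncomputable section
open Classical

/-- A Coxeter group together with the data of its geometric representation:
the group `W` with distinguished generators indexed by `B`, acting on a real
vector space `V`, with simple roots `alpha`, a set of positive roots `pos`,
an invariant bilinear form `form`, and an assignment `refl` of reflections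
to roots.  The axioms of such a system are collected in `GCS.IsGood`. -/
structure GCS : Type 1 where
  B : Type
  W : Type
  [grp : Group W]
  V : Type
  [acg : AddCommGroup V]
  [mod : Module ℝ V]
  s : B → W
  act : W → V → V
  alpha : B → V
  pos : Set V
  form : V → V → ℝ
  refl : V → W

attribute [instance] GCS.grp GCS.acg GCS.mod

namespace GCS

/-- The root system `Φ`: the orbit of the simple roots. -/
def Phi (c : GCS) : Set c.V := {v | ∃ w b, c.act w (c.alpha b) = v}

/-- The axioms of a geometric representation of a Coxeter system. -/
structure IsGood (c : GCS) : Prop where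
  s_sq : ∀ b, c.s b * c.s b = 1
  act_one : ∀ v, c.act 1 v = v
  act_mul : ∀ g h v, c.act (g * h) v = c.act g (c.act h v)
  act_add : ∀ g u v, c.act g (u + v) = c.act g u + c.act g v
  act_smul : ∀ g (a : ℝ) v, c.act g (a • v) = a • c.act g v
  act_s : ∀ b v, c.act (c.s b) v = v - (2 * c.form (c.alpha b) v) • c.alpha b
  form_symm : ∀ u v, c.form u v = c.form v u
  form_linear : ∀ (a : ℝ) u u' v, c.form (a • u + u') v = a * c.form u v + c.form u' v
  form_inv : ∀ w u v, c.form (c.act w u) (c.act w v) = c.form u v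
  form_alpha : ∀ b, c.form (c.alpha b) (c.alpha b) = 1
  alpha_pos : ∀ b, c.alpha b ∈ c.pos
  alpha_indep : LinearIndependent ℝ c.alpha
  root_pos_xor : ∀ v ∈ c.Phi, Xor' (v ∈ c.pos) (-v ∈ c.pos)
  refl_eq : ∀ w b, c.refl (c.act w (c.alpha b)) = w * c.s b * w⁻¹
  act_faithful : ∀ g, (∀ v, c.act g v = v) → g = 1
  generates : Subgroup.closure (Set.range c.s) = ⊤

/-- Product of the images of the letters of a word, in order. -/
def gprod (c : GCS) {T : Type*} (gens : T → c.W) (l : List T) : c.W := (l.map gens).prod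

/-- A word is reduced (w.r.t. a generating family) if no shorter word in the
same generators has the same product. -/
def Reduced (c : GCS) {T : Type*} (gens : T → c.W) (l : List T) : Prop :=
  ∀ l' : List T, gprod c gens l' = gprod c gens l → l.length ≤ l'.length

/-- The list of the positions of `X`, in increasing order. -/
def posList {r : ℕ} (X : Finset (Fin r)) : List (Fin r) :=
  (List.finRange r).filter (fun k => k ∈ X)

/-- The subword of `q` at the positions of `X`, in increasing order. -/
def swAt {r : ℕ} {T : Type*} (q : Fin r → T) (X : Finset (Fin r)) : List T :=
  (posList X).map q

/-- `I` is a face of the subword complex `SC(Q, π)`: the complement of `I`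
contains a reduced expression of `π`. -/
def IsFace (c : GCS) {T : Type*} (gens : T → c.W) {r : ℕ} (q : Fin r → T) (π : c.W)
    (I : Finset (Fin r)) : Prop :=
  ∃ J : Finset (Fin r), Disjoint J I ∧ Reduced c gens (swAt q J) ∧ gprod c gens (swAt q J) = π

/-- `I` is a facet (maximal face) of the subword complex `SC(Q, π)`. -/
def IsFacet (c : GCS) {T : Type*} (gens : T → c.W) {r : ℕ} (q : Fin r → T) (π : c.W)
    (I : Finset (Fin r)) : Prop :=
  IsFace c gens q π I ∧ ∀ I' : Finset (Fin r), IsFace c gens q π I' → I ⊆ I' → I' = I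

/-- Positions before `j` in the complement of `I` (the set `A_j`). -/
def before {r : ℕ} (I : Finset (Fin r)) (j : Fin r) : Finset (Fin r) :=
  Finset.univ.filter (fun k => k < j ∧ k ∉ I)

/-- The root function of a subword complex (generic version, for any
generating family `gens` with associated simple roots `αT`). -/
def grootFn (c : GCS) {T : Type*} (gens : T → c.W) (αT : T → c.V) {n : ℕ}
    (q : Fin n → T) (I : Finset (Fin n)) (j : Fin n) : c.V :=
  c.act (gprod c gens (swAt q (before I j))) (αT (q j))

/-- The root function `r(I, ·)` of a subword complex. -/
def rootFn (c : GCS) {r : ℕ} (q : Fin r → c.B) (I : Finset (Fin r)) (j : Fin r) : c.V :=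
  grootFn c c.s c.alpha q I j

/-- `J` is (the set of positions of) a flat of the list of roots `r(I,Q)`:
the positions whose root lies in some linear subspace `U`. -/
def IsFlat (c : GCS) {r : ℕ} (q : Fin r → c.B) (I J : Finset (Fin r)) : Prop :=
  ∃ U : Submodule ℝ c.V, ∀ j : Fin r, j ∈ J ↔ rootFn c q I j ∈ U

/-- The span `V_F` of the roots of the flat. -/
def VF (c : GCS) {r : ℕ} (q : Fin r → c.B) (I J : Finset (Fin r)) : Submodule ℝ c.V :=
  Submodule.span ℝ ((fun j => rootFn c q I j) '' ↑J)

/-- The root subsystem `Φ_F = Φ ∩ V_F`. -/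
def PhiF (c : GCS) {r : ℕ} (q : Fin r → c.B) (I J : Finset (Fin r)) : Set c.V :=
  c.Phi ∩ ↑(VF c q I J)

/-- The positive roots `Φ_F⁺ = Φ⁺ ∩ V_F` of the root subsystem. -/
def PosF (c : GCS) {r : ℕ} (q : Fin r → c.B) (I J : Finset (Fin r)) : Set c.V :=
  c.pos ∩ PhiF c q I J

/-- `β` is a simple root of the root subsystem with positive roots `P`:
it is a positive root of the subsystem, and it is indecomposable, i.e. not a
positive linear combination of two other positive roots of the subsystem. -/
def IsSimpleIn (c : GCS) (P : Set c.V) (β : c.V) : Prop :=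
  β ∈ P ∧ ∀ γ₁ ∈ P, ∀ γ₂ ∈ P, γ₁ ≠ β → γ₂ ≠ β →
    ∀ a b : ℝ, 0 < a → 0 < b → β ≠ a • γ₁ + b • γ₂

/-- The set `Δ_F` of simple roots of the root subsystem `Φ_F`. -/
def DeltaF (c : GCS) {r : ℕ} (q : Fin r → c.B) (I J : Finset (Fin r)) : Set c.V :=
  {β | IsSimpleIn c (PosF c q I J) β}

/-- The `k`-th element `j_k` of `J` in increasing order. -/
def flatIdx {r : ℕ} (J : Finset (Fin r)) (k : Fin J.card) : Fin r :=
  ((J.orderIsoOfFin rfl) k : {x // x ∈ J})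

/-- Positions before `j` outside of `I` and outside of the flat `J`
(the set `B_j`). -/
def beforeF {r : ℕ} (I J : Finset (Fin r)) (j : Fin r) : Finset (Fin r) :=
  Finset.univ.filter (fun k => k < j ∧ k ∉ I ∧ k ∉ J)

/-- The roots `β_k = Q_{B_{j_k}}(α_{q_{j_k}})`. -/
def betaF (c : GCS) {r : ℕ} (q : Fin r → c.B) (I J : Finset (Fin r)) (k : Fin J.card) : c.V :=
  c.act (gprod c c.s (swAt q (beforeF I J (flatIdx J k)))) (c.alpha (q (flatIdx J k)))

/-- The letters of the word `Q_F`: the `k`-th letter is the generator of `W_F`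
corresponding to the simple root `β_k`, i.e. the reflection `s_{β_k}`,
viewed inside the ambient group. -/
def qeltF (c : GCS) {r : ℕ} (q : Fin r → c.B) (I J : Finset (Fin r)) (k : Fin J.card) : c.W :=
  c.refl (betaF c q I J k)

/-- The subset `I_F ⊆ [r']` corresponding to `I`. -/
def IF {r : ℕ} (I J : Finset (Fin r)) : Finset (Fin J.card) :=
  Finset.univ.filter (fun k => flatIdx J k ∈ I)

/-- The element `π_F`: product of the letters of `Q_F` at the complement of `I_F`. -/
def piF (c : GCS) {r : ℕ} (q : Fin r → c.B) (I J : Finset (Fin r)) : c.W :=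
  gprod c (qeltF c q I J) (swAt (fun k => k) (IF I J)ᶜ)

end GCS

namespace GCSAux
open GCS

variable {r : ℕ}

lemma mem_posList {X : Finset (Fin r)} {p : Fin r} : p ∈ posList X ↔ p ∈ X := by
  simp [posList]

lemma pairwise_posList (X : Finset (Fin r)) : (posList X).Pairwise (· < ·) :=
  (List.pairwise_lt_finRange r).filter _

lemma sorted_unique {l₁ l₂ : List (Fin r)}
    (h₁ : l₁.Pairwise (· < ·)) (h₂ : l₂.Pairwise (· < ·))
    (h : ∀ a, a ∈ l₁ ↔ a ∈ l₂) : l₁ = l₂ := by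
  have n₁ : l₁.Nodup := h₁.imp ne_of_lt
  have n₂ : l₂.Nodup := h₂.imp ne_of_lt
  exact List.Perm.eq_of_pairwise' (h₁.imp le_of_lt) (h₂.imp le_of_lt)
    ((List.perm_ext_iff_of_nodup n₁ n₂).2 h)

lemma eq_posList {l : List (Fin r)} {X : Finset (Fin r)}
    (hs : l.Pairwise (· < ·)) (h : ∀ x, x ∈ l ↔ x ∈ X) : l = posList X :=
  sorted_unique hs (pairwise_posList X) (fun a => (h a).trans mem_posList.symm)

/-- Product of the letters `s (q p)` over a list of positions. -/
def sprod (c : GCS) (q : Fin r → c.B) (l : List (Fin r)) : c.W :=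
  (l.map (fun p => c.s (q p))).prod

lemma gprod_swAt (c : GCS) (q : Fin r → c.B) (X : Finset (Fin r)) :
    gprod c c.s (swAt q X) = sprod c q (posList X) := by
  simp [gprod, swAt, sprod, List.map_map]; rfl

/-- The conjugated reflection `R(p) = Q_{B_p} s_{q_p} Q_{B_p}⁻¹`. -/
def RR (c : GCS) (q : Fin r → c.B) (I J : Finset (Fin r)) (p : Fin r) : c.W :=
  c.refl (c.act (gprod c c.s (swAt q (beforeF I J p))) (c.alpha (q p)))

lemma key (c : GCS) (hg : c.IsGood) (q : Fin r → c.B) (I J : Finset (Fin r)) :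
    ∀ l : List (Fin r), l.Pairwise (· < ·) →
      (∀ p ∈ l, p ∉ I) →
      (∀ p ∈ l, ∀ p' : Fin r, p' < p → p' ∉ I → p' ∈ l) →
      sprod c q l =
        ((l.filter (fun p => p ∈ J)).map (RR c q I J)).prod *
          sprod c q (l.filter (fun p => p ∉ J)) := by
  intro l
  induction l using List.reverseRecOn with
  | nil => simp [sprod]
  | append_singleton t p ih =>
    intro hs hI hdc
    rw [List.pairwise_append] at hs
    obtain ⟨ht, -, hlt⟩ := hs
    have hmax : ∀ x ∈ t, x < p := fun x hx => hlt x hx p (by simp)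
    have hIt : ∀ x ∈ t, x ∉ I := fun x hx => hI x (by simp [hx])
    have hdct : ∀ x ∈ t, ∀ p' : Fin r, p' < x → p' ∉ I → p' ∈ t := by
      intro x hx p' hp' hp'I
      rcases List.mem_append.1 (hdc x (by simp [hx]) p' hp' hp'I) with h | h
      · exact h
      · simp only [List.mem_singleton] at h
        subst h
        exact absurd (hp'.trans (hmax x hx)) (lt_irrefl _)
    have htU : t.filter (fun x => x ∉ J) = posList (beforeF I J p) := by
      apply eq_posList (ht.filter _)
      intro x
      simp only [List.mem_filter, beforeF, Finset.mem_filter, Finset.mem_univ,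
        true_and, decide_eq_true_eq]
      constructor
      · rintro ⟨hx, hxJ⟩
        exact ⟨hmax x hx, hIt x hx, hxJ⟩
      · rintro ⟨hxp, hxI, hxJ⟩
        rcases List.mem_append.1 (hdc p (by simp) x hxp hxI) with h | h
        · exact ⟨h, hxJ⟩
        · simp only [List.mem_singleton] at h
          subst h
          exact absurd hxp (lt_irrefl _)
    have ihs := ih ht hIt hdct
    have hsplit : sprod c q (t ++ [p]) = sprod c q t * c.s (q p) := by
      simp [sprod]
    have hw : RR c q I J p
        = sprod c q (t.filter (fun x => x ∉ J)) * c.s (q p)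
            * (sprod c q (t.filter (fun x => x ∉ J)))⁻¹ := by
      rw [htU, RR, gprod_swAt, hg.refl_eq]
    by_cases hpJ : p ∈ J
    · have h1 : List.filter (fun x => decide (x ∈ J)) (t ++ [p])
          = List.filter (fun x => decide (x ∈ J)) t ++ [p] := by
        simp [List.filter_append, hpJ]
      have h2 : List.filter (fun x => decide (x ∉ J)) (t ++ [p])
          = List.filter (fun x => decide (x ∉ J)) t := by
        simp [List.filter_append, hpJ]
      rw [h1, h2, hsplit, ihs, List.map_append, List.prod_append,
        List.map_singleton, List.prod_singleton, hw]
      group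
    · have h1 : List.filter (fun x => decide (x ∈ J)) (t ++ [p])
          = List.filter (fun x => decide (x ∈ J)) t := by
        simp [List.filter_append, hpJ]
      have h2 : List.filter (fun x => decide (x ∉ J)) (t ++ [p])
          = List.filter (fun x => decide (x ∉ J)) t ++ [p] := by
        simp [List.filter_append, hpJ]
      rw [h1, h2, hsplit, ihs]
      simp [sprod, mul_assoc]

lemma flatIdx_strictMono {J : Finset (Fin r)} : StrictMono (flatIdx J) := by
  intro a b h
  exact (J.orderIsoOfFin rfl).strictMono h

lemma flatIdx_mem {J : Finset (Fin r)} (k : Fin J.card) : flatIdx J k ∈ J :=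
  ((J.orderIsoOfFin rfl) k).2

lemma flatIdx_surj {J : Finset (Fin r)} {x : Fin r} (hx : x ∈ J) :
    ∃ i, flatIdx J i = x := by
  obtain ⟨i, hi⟩ := (J.orderIsoOfFin rfl).surjective ⟨x, hx⟩
  exact ⟨i, by simp [flatIdx, hi]⟩

end GCSAux

open GCS in
/-- Decomposition theorem of subword complexes (first part): given a facet `I`
of `SC(Q, π)` and a flat `F` (with set of positions `J = {j_1 < … < j_{r'}}`)
of `r(I,Q)`, the flat is the root function of the restricted subword complex
`SC(Q_F, π_F)` with respect to the facet `I_F`: for every `k ∈ [r']`,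
`r_F(I_F, k) = r(I, j_k)`.  Here the root function `r_F` of `SC(Q_F, π_F)`
over the Coxeter system `(W_F, Δ_F)` is computed from the word `Q_F` (whose
`k`-th letter is the reflection corresponding to the simple root `β_k`). -/
theorem decomposition_theorem_root_function
    (c : GCS) (hgood : c.IsGood) {r : ℕ} (q : Fin r → c.B) (π : c.W)
    (I : Finset (Fin r)) (hI : IsFacet c c.s q π I)
    (J : Finset (Fin r)) (hJ : IsFlat c q I J) :
    ∀ k : Fin J.card,
      grootFn c (qeltF c q I J) (betaF c q I J) (fun k => k) (IF I J) k
        = rootFn c q I (flatIdx J k) := by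

  intro k
  set j := flatIdx J k with hj
  classical
  -- Lemma C applied to l = posList (before I j)
  have hmem : ∀ x : Fin r, x ∈ posList (before I j) ↔ x < j ∧ x ∉ I := by
    intro x
    rw [GCSAux.mem_posList]
    simp [before]
  have hkey := GCSAux.key c hgood q I J (posList (before I j))
      (GCSAux.pairwise_posList _)
      (fun p hp => ((hmem p).1 hp).2)
      (by
        intro p hp p' h1 h2
        exact (hmem p').2 ⟨h1.trans ((hmem p).1 hp).1, h2⟩)
  have hU : (posList (before I j)).filter (fun x => x ∉ J)
      = posList (beforeF I J j) := by
    apply GCSAux.eq_posList ((GCSAux.pairwise_posList _).filter _)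
    intro x
    simp only [List.mem_filter, decide_not, Bool.not_eq_true', decide_eq_false_iff_not,
      GCSAux.mem_posList, before, beforeF, Finset.mem_filter, Finset.mem_univ, true_and]
    tauto
  have hJl : (posList (before (IF I J) k)).map (flatIdx J)
      = (posList (before I j)).filter (fun x => x ∈ J) := by
    apply GCSAux.sorted_unique
    · exact ((GCSAux.pairwise_posList _).map _ (fun a b hab => GCSAux.flatIdx_strictMono hab))
    · exact (GCSAux.pairwise_posList _).filter _
    · intro x
      simp only [List.mem_map, List.mem_filter, GCSAux.mem_posList, before,
        Finset.mem_filter, Finset.mem_univ, true_and, IF, decide_eq_true_eq]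
      constructor
      · rintro ⟨i, ⟨hik, hiI⟩, rfl⟩
        exact ⟨⟨GCSAux.flatIdx_strictMono hik, by simpa using hiI⟩, GCSAux.flatIdx_mem i⟩
      · rintro ⟨⟨hxj, hxI⟩, hxJ⟩
        obtain ⟨i, rfl⟩ := GCSAux.flatIdx_surj hxJ
        exact ⟨i, ⟨GCSAux.flatIdx_strictMono.lt_iff_lt.1 hxj, by simpa using hxI⟩, rfl⟩
  -- unfold both sides
  rw [grootFn, rootFn, grootFn, GCSAux.gprod_swAt, hkey, hU]
  have hact : ∀ g h v, c.act (g*h) v = c.act g (c.act h v) := hgood.act_mul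
  rw [hact]
  have hbeta : c.act (GCSAux.sprod c q (posList (beforeF I J j)))
      (c.alpha (q j)) = betaF c q I J k := by
    rw [betaF, GCSAux.gprod_swAt]
  rw [hbeta]
  congr 1
  -- remaining: gprod c (qeltF ...) (swAt id (before (IF) k)) = prod of RR over filtered list
  rw [← hJl, gprod, swAt, List.map_map, List.map_map]

  rfl
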